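/- For every m ≥ 3, the crown graph J_{2m} (K_{m,m} minus a perfect matching) admits a total colouring with m colours in which, on each side of the bipartition {x₁,…,x_m}, {y₁,…,y_m} with x_k not adjacent to y_k, the vertex colours satisfy: h(x_k) = h(x_t) iff k = t, h(y_k) = h(y_t) iff k = t, and h(x_k) = h(y_t) iff k = t. -/

import Mathlib

open SimpleGraph

variable {V : Type*} {W : Type*}

/-- The direct (tensor) product of two simple graphs. -/
def tensorProd (G : SimpleGraph V) (H : SimpleGraph W) : SimpleGraph (V × W) where
  Adj a b := G.Adj a.1 b.1 ∧ H.Adj a.2 b.2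
  symm := ⟨fun _ _ h => ⟨G.adj_symm h.1, H.adj_symm h.2⟩⟩
  loopless := ⟨fun a h => G.irrefl h.1⟩

instance tensorProd.adjDecidable (G : SimpleGraph V) (H : SimpleGraph W)
    [DecidableRel G.Adj] [DecidableRel H.Adj] : DecidableRel (tensorProd G H).Adj :=
  fun _ _ => instDecidableAnd

/-- A proper edge colouring with `n` colours, given as a symmetric function on adjacent pairs. -/
def IsEdgeColoring (G : SimpleGraph V) (n : ℕ) (ce : V → V → Fin n) : Prop :=
  (∀ u v, G.Adj u v → ce u v = ce v u) ∧
  (∀ u v w, G.Adj u v → G.Adj u w → v ≠ w → ce u v ≠ ce u w)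

/-- A proper total colouring with `n` colours. -/
def IsTotalColoring (G : SimpleGraph V) (n : ℕ) (cv : V → Fin n) (ce : V → V → Fin n) : Prop :=
  (∀ u v, G.Adj u v → ce u v = ce v u) ∧
  (∀ u v, G.Adj u v → cv u ≠ cv v) ∧
  (∀ u v w, G.Adj u v → G.Adj u w → v ≠ w → ce u v ≠ ce u w) ∧
  (∀ u v, G.Adj u v → ce u v ≠ cv u ∧ ce u v ≠ cv v)

/-- The total chromatic number of a graph. -/
noncomputable def totalChromaticNumber (G : SimpleGraph V) : ℕ :=
  sInf {n | ∃ cv ce, IsTotalColoring G n cv ce}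

/-- Adjacency of the crown graph. -/
def crownAdj {m : ℕ} : Fin m ⊕ Fin m → Fin m ⊕ Fin m → Prop
  | Sum.inl k, Sum.inr t => k ≠ t
  | Sum.inr k, Sum.inl t => k ≠ t
  | _, _ => False

/-- The crown graph `J_{2m}`: `K_{m,m}` minus a perfect matching. -/
def crown (m : ℕ) : SimpleGraph (Fin m ⊕ Fin m) where
  Adj := crownAdj
  symm := ⟨by rintro (k|k) (t|t) h <;> simp only [crownAdj] at * <;> exact fun e => h e.symm⟩
  loopless := ⟨by rintro (k|k) h <;> simp only [crownAdj] at h⟩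

instance crown.adjDecidable (m : ℕ) : DecidableRel (crown m).Adj := fun a b =>
  match a, b with
  | Sum.inl k, Sum.inr t => (inferInstance : Decidable (k ≠ t))
  | Sum.inr k, Sum.inl t => (inferInstance : Decidable (k ≠ t))
  | Sum.inl _, Sum.inl _ => isFalse (fun h => h)
  | Sum.inr _, Sum.inr _ => isFalse (fun h => h)

section AuxLatin
open Function

lemma two_mul_half (n : ℕ) (hn : Odd n) :
    (2 : ZMod n) * (((n + 1) / 2 : ℕ) : ZMod n) = 1 := by
  have h1 : 2 * ((n + 1) / 2) = n + 1 := by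
    obtain ⟨k, hk⟩ := hn; omega
  have h2 := congrArg (Nat.cast : ℕ → ZMod n) h1
  push_cast at h2
  simpa [ZMod.natCast_self] using h2

lemma half_cancel {n : ℕ} (hn : Odd n) {x y : ZMod n}
    (h : x * (((n + 1) / 2 : ℕ) : ZMod n) = y * (((n + 1) / 2 : ℕ) : ZMod n)) : x = y := by
  have h2 := two_mul_half n hn
  calc x = x * (2 * (((n + 1) / 2 : ℕ) : ZMod n)) := by rw [h2, mul_one]
  _ = x * (((n + 1) / 2 : ℕ) : ZMod n) * 2 := by ring
  _ = y * (((n + 1) / 2 : ℕ) : ZMod n) * 2 := by rw [h]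
  _ = y * (2 * (((n + 1) / 2 : ℕ) : ZMod n)) := by ring
  _ = y := by rw [h2, mul_one]

lemma fin_cast_inj {m : ℕ} {k t : Fin m} (h : ((k : ℕ) : ZMod m) = ((t : ℕ) : ZMod m)) :
    k = t := by
  have := congrArg ZMod.val h
  rw [ZMod.val_cast_of_lt k.isLt, ZMod.val_cast_of_lt t.isLt] at this
  exact Fin.ext this

lemma exists_idem_latin_odd (m : ℕ) (hm : 0 < m) (ho : Odd m) :
    ∃ M : Fin m → Fin m → Fin m, (∀ k, Injective (M k)) ∧
      (∀ t, Injective fun k => M k t) ∧ ∀ k, M k k = k := by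
  haveI : NeZero m := ⟨by omega⟩
  set H : ZMod m := (((m + 1) / 2 : ℕ) : ZMod m) with hH
  refine ⟨fun k t => ⟨((((k : ℕ) : ZMod m) + ((t : ℕ) : ZMod m)) * H).val, ZMod.val_lt _⟩,
    ?_, ?_, ?_⟩
  · intro k t t' h
    have h2 : ((((k : ℕ) : ZMod m) + ((t : ℕ) : ZMod m)) * H)
        = ((((k : ℕ) : ZMod m) + ((t' : ℕ) : ZMod m)) * H) :=
      ZMod.val_injective m (congrArg Fin.val h)
    exact fin_cast_inj (by have := half_cancel ho h2; exact add_left_cancel this)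
  · intro t k k' h
    have h2 : ((((k : ℕ) : ZMod m) + ((t : ℕ) : ZMod m)) * H)
        = ((((k' : ℕ) : ZMod m) + ((t : ℕ) : ZMod m)) * H) :=
      ZMod.val_injective m (congrArg Fin.val h)
    exact fin_cast_inj (by have := half_cancel ho h2; exact add_right_cancel this)
  · intro k
    have : (((k : ℕ) : ZMod m) + ((k : ℕ) : ZMod m)) * H = ((k : ℕ) : ZMod m) := by
      have := two_mul_half m ho
      calc (((k : ℕ) : ZMod m) + ((k : ℕ) : ZMod m)) * H
          = ((k : ℕ) : ZMod m) * (2 * H) := by ring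
        _ = ((k : ℕ) : ZMod m) := by rw [this, mul_one]
    simp only []
    exact Fin.ext (by rw [this]; exact ZMod.val_cast_of_lt k.isLt)

lemma exists_idem_latin_even (m : ℕ) (hm : 4 ≤ m) (he : Even m) :
    ∃ M : Fin m → Fin m → Fin m, (∀ k, Injective (M k)) ∧
      (∀ t, Injective fun k => M k t) ∧ ∀ k, M k k = k := by
  set q := m - 1 with hqdef
  have hq : q + 1 = m := by omega
  have hq3 : 3 ≤ q := by omega
  have ho : Odd q := by
    obtain ⟨r, hr⟩ := he; exact ⟨r - 1, by omega⟩
  haveI : NeZero q := ⟨by omega⟩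
  set H : ZMod q := (((q + 1) / 2 : ℕ) : ZMod q) with hH
  -- basic helpers
  have hone : (1 : ZMod q) ≠ 0 := by
    haveI : Fact (1 < q) := ⟨by omega⟩
    exact one_ne_zero
  have hcast : ∀ i j : ℕ, i < q → j < q → ((i : ZMod q) = (j : ZMod q)) → i = j := by
    intro i j hi hj hij
    have := congrArg ZMod.val hij
    rwa [ZMod.val_cast_of_lt hi, ZMod.val_cast_of_lt hj] at this
  have hvlt : ∀ z : ZMod q, z.val < m := fun z => by have := ZMod.val_lt z; omega
  have hcan : ∀ x y : ZMod q, x * H = y * H → x = y := fun x y h => half_cancel ho h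
  refine ⟨fun a b =>
    if ha : (a : ℕ) < q then
      if hb : (b : ℕ) < q then
        if (((b : ℕ) : ZMod q) = ((a : ℕ) : ZMod q) + 1) then ⟨q, by omega⟩
        else ⟨(((((a : ℕ) : ZMod q)) + ((b : ℕ) : ZMod q)) * H).val, hvlt _⟩
      else ⟨((2 * ((a : ℕ) : ZMod q) + 1) * H).val, hvlt _⟩
    else
      if hb : (b : ℕ) < q then ⟨((2 * ((b : ℕ) : ZMod q) - 1) * H).val, hvlt _⟩
      else ⟨q, by omega⟩, ?_, ?_, ?_⟩
  · -- rows injective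
    intro a b b' h
    simp only [] at h
    by_cases ha : (a : ℕ) < q
    · rw [dif_pos ha, dif_pos ha] at h
      by_cases hb : (b : ℕ) < q
      · rw [dif_pos hb] at h
        by_cases hb' : (b' : ℕ) < q
        · rw [dif_pos hb'] at h
          by_cases hc : ((b : ℕ) : ZMod q) = ((a : ℕ) : ZMod q) + 1
          · rw [if_pos hc] at h
            by_cases hc' : ((b' : ℕ) : ZMod q) = ((a : ℕ) : ZMod q) + 1
            · exact Fin.ext (hcast _ _ hb hb' (by rw [hc, hc']))
            · rw [if_neg hc'] at h
              have := congrArg Fin.val h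
              have := ZMod.val_lt ((((a : ℕ) : ZMod q) + ((b' : ℕ) : ZMod q)) * H)
              simp only [Fin.val_mk] at *
              omega
          · rw [if_neg hc] at h
            by_cases hc' : ((b' : ℕ) : ZMod q) = ((a : ℕ) : ZMod q) + 1
            · rw [if_pos hc'] at h
              have := congrArg Fin.val h
              have := ZMod.val_lt ((((a : ℕ) : ZMod q) + ((b : ℕ) : ZMod q)) * H)
              simp only [Fin.val_mk] at *
              omega
            · rw [if_neg hc'] at h
              have h2 := ZMod.val_injective q (congrArg Fin.val h)
              have h3 := hcan _ _ h2
              exact Fin.ext (hcast _ _ hb hb' (add_left_cancel h3))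
        · -- b' = top
          rw [dif_neg hb'] at h
          by_cases hc : ((b : ℕ) : ZMod q) = ((a : ℕ) : ZMod q) + 1
          · rw [if_pos hc] at h
            have := congrArg Fin.val h
            have := ZMod.val_lt ((2 * ((a : ℕ) : ZMod q) + 1) * H)
            simp only [Fin.val_mk] at *
            omega
          · rw [if_neg hc] at h
            have h2 := ZMod.val_injective q (congrArg Fin.val h)
            have h3 := hcan _ _ h2
            exact absurd (by linear_combination h3) hc
      · rw [dif_neg hb] at h
        by_cases hb' : (b' : ℕ) < q
        · rw [dif_pos hb'] at h
          by_cases hc' : ((b' : ℕ) : ZMod q) = ((a : ℕ) : ZMod q) + 1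
          · rw [if_pos hc'] at h
            have := congrArg Fin.val h
            have := ZMod.val_lt ((2 * ((a : ℕ) : ZMod q) + 1) * H)
            simp only [Fin.val_mk] at *
            omega
          · rw [if_neg hc'] at h
            have h2 := ZMod.val_injective q (congrArg Fin.val h)
            have h3 := hcan _ _ h2
            exact absurd (by linear_combination -h3) hc'
        · rw [dif_neg hb'] at h
          have hb2 := b.isLt; have hb'2 := b'.isLt
          exact Fin.ext (by omega)
    · rw [dif_neg ha, dif_neg ha] at h
      by_cases hb : (b : ℕ) < q
      · rw [dif_pos hb] at h
        by_cases hb' : (b' : ℕ) < q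
        · rw [dif_pos hb'] at h
          have h2 := ZMod.val_injective q (congrArg Fin.val h)
          have h3 := hcan _ _ h2
          have h4 : 2 * ((b : ℕ) : ZMod q) = 2 * ((b' : ℕ) : ZMod q) := by
            linear_combination h3
          have h5 : ((b : ℕ) : ZMod q) = ((b' : ℕ) : ZMod q) := by
            have := hcan ((2 : ZMod q) * ((b : ℕ) : ZMod q)) (2 * ((b' : ℕ) : ZMod q))
              (by rw [h4])
            calc ((b : ℕ) : ZMod q) = ((b : ℕ) : ZMod q) * (2 * H) := by
                  rw [two_mul_half q ho, mul_one]
              _ = 2 * ((b : ℕ) : ZMod q) * H := by ring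
              _ = 2 * ((b' : ℕ) : ZMod q) * H := by rw [h4]
              _ = ((b' : ℕ) : ZMod q) * (2 * H) := by ring
              _ = ((b' : ℕ) : ZMod q) := by rw [two_mul_half q ho, mul_one]
          exact Fin.ext (hcast _ _ hb hb' h5)
        · rw [dif_neg hb'] at h
          have := congrArg Fin.val h
          have := ZMod.val_lt ((2 * ((b : ℕ) : ZMod q) - 1) * H)
          simp only [Fin.val_mk] at *
          omega
      · rw [dif_neg hb] at h
        by_cases hb' : (b' : ℕ) < q
        · rw [dif_pos hb'] at h
          have := congrArg Fin.val h
          have := ZMod.val_lt ((2 * ((b' : ℕ) : ZMod q) - 1) * H)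
          simp only [Fin.val_mk] at *
          omega
        · rw [dif_neg hb'] at h
          have hb2 := b.isLt; have hb'2 := b'.isLt
          exact Fin.ext (by omega)
  · -- columns injective
    intro b a a' h
    simp only [] at h
    by_cases hb : (b : ℕ) < q
    · by_cases ha : (a : ℕ) < q
      · rw [dif_pos ha, dif_pos hb] at h
        by_cases ha' : (a' : ℕ) < q
        · rw [dif_pos ha', dif_pos hb] at h
          by_cases hc : ((b : ℕ) : ZMod q) = ((a : ℕ) : ZMod q) + 1
          · rw [if_pos hc] at h
            by_cases hc' : ((b : ℕ) : ZMod q) = ((a' : ℕ) : ZMod q) + 1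
            · exact Fin.ext (hcast _ _ ha ha' (add_right_cancel (hc ▸ hc')))
            · rw [if_neg hc'] at h
              have := congrArg Fin.val h
              have := ZMod.val_lt ((((a' : ℕ) : ZMod q) + ((b : ℕ) : ZMod q)) * H)
              simp only [Fin.val_mk] at *
              omega
          · rw [if_neg hc] at h
            by_cases hc' : ((b : ℕ) : ZMod q) = ((a' : ℕ) : ZMod q) + 1
            · rw [if_pos hc'] at h
              have := congrArg Fin.val h
              have := ZMod.val_lt ((((a : ℕ) : ZMod q) + ((b : ℕ) : ZMod q)) * H)
              simp only [Fin.val_mk] at *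
              omega
            · rw [if_neg hc'] at h
              have h2 := ZMod.val_injective q (congrArg Fin.val h)
              have h3 := hcan _ _ h2
              exact Fin.ext (hcast _ _ ha ha' (add_right_cancel h3))
        · rw [dif_neg ha', dif_pos hb] at h
          by_cases hc : ((b : ℕ) : ZMod q) = ((a : ℕ) : ZMod q) + 1
          · rw [if_pos hc] at h
            have := congrArg Fin.val h
            have := ZMod.val_lt ((2 * ((b : ℕ) : ZMod q) - 1) * H)
            simp only [Fin.val_mk] at *
            omega
          · rw [if_neg hc] at h
            have h2 := ZMod.val_injective q (congrArg Fin.val h)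
            have h3 := hcan _ _ h2
            exact absurd (by linear_combination -h3) hc
      · rw [dif_neg ha, dif_pos hb] at h
        by_cases ha' : (a' : ℕ) < q
        · rw [dif_pos ha', dif_pos hb] at h
          by_cases hc' : ((b : ℕ) : ZMod q) = ((a' : ℕ) : ZMod q) + 1
          · rw [if_pos hc'] at h
            have := congrArg Fin.val h
            have := ZMod.val_lt ((2 * ((b : ℕ) : ZMod q) - 1) * H)
            simp only [Fin.val_mk] at *
            omega
          · rw [if_neg hc'] at h
            have h2 := ZMod.val_injective q (congrArg Fin.val h)
            have h3 := hcan _ _ h2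
            exact absurd (by linear_combination h3) hc'
        · have ha2 := a.isLt; have ha'2 := a'.isLt
          exact Fin.ext (by omega)
    · by_cases ha : (a : ℕ) < q
      · rw [dif_pos ha, dif_neg hb] at h
        by_cases ha' : (a' : ℕ) < q
        · rw [dif_pos ha', dif_neg hb] at h
          have h2 := ZMod.val_injective q (congrArg Fin.val h)
          have h3 := hcan _ _ h2
          have h4 : 2 * ((a : ℕ) : ZMod q) = 2 * ((a' : ℕ) : ZMod q) := by
            linear_combination h3
          have h5 : ((a : ℕ) : ZMod q) = ((a' : ℕ) : ZMod q) := by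
            calc ((a : ℕ) : ZMod q) = ((a : ℕ) : ZMod q) * (2 * H) := by
                  rw [two_mul_half q ho, mul_one]
              _ = 2 * ((a : ℕ) : ZMod q) * H := by ring
              _ = 2 * ((a' : ℕ) : ZMod q) * H := by rw [h4]
              _ = ((a' : ℕ) : ZMod q) * (2 * H) := by ring
              _ = ((a' : ℕ) : ZMod q) := by rw [two_mul_half q ho, mul_one]
          exact Fin.ext (hcast _ _ ha ha' h5)
        · rw [dif_neg ha', dif_neg hb] at h
          have := congrArg Fin.val h
          have := ZMod.val_lt ((2 * ((a : ℕ) : ZMod q) + 1) * H)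
          simp only [Fin.val_mk] at *
          omega
      · rw [dif_neg ha, dif_neg hb] at h
        by_cases ha' : (a' : ℕ) < q
        · rw [dif_pos ha', dif_neg hb] at h
          have := congrArg Fin.val h
          have := ZMod.val_lt ((2 * ((a' : ℕ) : ZMod q) + 1) * H)
          simp only [Fin.val_mk] at *
          omega
        · have ha2 := a.isLt; have ha'2 := a'.isLt
          exact Fin.ext (by omega)
  · -- idempotent
    intro k
    simp only []
    by_cases hk : (k : ℕ) < q
    · rw [dif_pos hk, dif_pos hk, if_neg (by
        intro hcc
        exact hone (by linear_combination -hcc))]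
      refine Fin.ext ?_
      simp only [Fin.val_mk]
      have : (((k : ℕ) : ZMod q) + ((k : ℕ) : ZMod q)) * H = ((k : ℕ) : ZMod q) := by
        calc (((k : ℕ) : ZMod q) + ((k : ℕ) : ZMod q)) * H
            = ((k : ℕ) : ZMod q) * (2 * H) := by ring
          _ = ((k : ℕ) : ZMod q) := by rw [two_mul_half q ho, mul_one]
      rw [this, ZMod.val_cast_of_lt hk]
    · rw [dif_neg hk, dif_neg hk]
      have := k.isLt
      refine Fin.ext ?_
      simp only [Fin.val_mk]
      omega

lemma exists_idem_latin (m : ℕ) (hm : 3 ≤ m) :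
    ∃ M : Fin m → Fin m → Fin m, (∀ k, Injective (M k)) ∧
      (∀ t, Injective fun k => M k t) ∧ ∀ k, M k k = k := by
  rcases Nat.even_or_odd m with he | ho
  · exact exists_idem_latin_even m (by rcases he with ⟨r, hr⟩; omega) he
  · exact exists_idem_latin_odd m (by omega) ho

end AuxLatin

open Function in
theorem crown_totalColoring (m : ℕ) (hm : 3 ≤ m) :
    ∃ (cv : Fin m ⊕ Fin m → Fin m) (ce : Fin m ⊕ Fin m → Fin m ⊕ Fin m → Fin m),
      IsTotalColoring (crown m) m cv ce ∧
      (∀ k t : Fin m, cv (Sum.inl k) = cv (Sum.inl t) ↔ k = t) ∧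
      (∀ k t : Fin m, cv (Sum.inr k) = cv (Sum.inr t) ↔ k = t) ∧
      (∀ k t : Fin m, cv (Sum.inl k) = cv (Sum.inr t) ↔ k = t) := by
  obtain ⟨M, hrow, hcol, hid⟩ := exists_idem_latin m hm
  refine ⟨Sum.elim id id,
    fun u v => match u, v with
      | Sum.inl k, Sum.inr t => M k t
      | Sum.inr k, Sum.inl t => M t k
      | _, _ => ⟨0, by omega⟩, ⟨?_, ?_, ?_, ?_⟩, ?_, ?_, ?_⟩
  · rintro (k | k) (t | t) h <;> first | exact absurd h (by exact fun h => h) | rfl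
  · rintro (k | k) (t | t) h <;>
      first | exact absurd h (by exact fun h => h) | exact fun e => h (by simpa using e)
  · rintro (k | k) (t | t) (t' | t') h1 h2 hne <;>
      first
        | exact absurd h1 (by exact fun h => h)
        | exact absurd h2 (by exact fun h => h)
        | exact fun e => hne (by rw [hrow k e])
        | exact fun e => hne (by rw [hcol k e])
  · rintro (k | k) (t | t) h <;> first | exact absurd h (by exact fun h => h) | skip
    · exact ⟨fun e => (h : k ≠ t) ((hrow k (e.trans (hid k).symm)).symm),
        fun e => (h : k ≠ t) (hcol t (e.trans (hid t).symm))⟩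
    · exact ⟨fun e => (h : k ≠ t) (hcol k (e.trans (hid k).symm)).symm,
        fun e => (h : k ≠ t) (hrow t (e.trans (hid t).symm))⟩
  · intro k t; simp
  · intro k t; simp
  · intro k t; simp
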